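/- With the construction below: if there exists an index j ∈ {1,…,n} with α_j = β_j = 1, then ED(x1 ∘ x2, y) ≤ 7n − 3. -/

import Mathlib

open List

/-- Costs for the edit operations (as in the former `Mathlib.Data.List.EditDistance.Defs`). -/
structure Levenshtein.Cost (α β δ : Type*) where
  delete : α → δ
  insert : β → δ
  substitute : α → β → δ

/-- The default cost structure: every operation costs 1, substituting equal symbols costs 0. -/
def Levenshtein.defaultCost {α : Type*} [DecidableEq α] : Levenshtein.Cost α α ℕ where
  delete _ := 1
  insert _ := 1
  substitute a b := if a = b then 0 else 1

/-- Levenshtein distance with cost structure `C` (former Mathlib definition, by its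
characterizing equations). -/
def levenshtein {α β δ : Type*} [AddZeroClass δ] [Min δ] (C : Levenshtein.Cost α β δ) :
    List α → List β → δ
  | [], [] => 0
  | [], y :: ys => C.insert y + levenshtein C [] ys
  | x :: xs, [] => C.delete x + levenshtein C xs []
  | x :: xs, y :: ys =>
    min (C.delete x + levenshtein C xs (y :: ys))
      (min (C.insert y + levenshtein C (x :: xs) ys)
        (C.substitute x y + levenshtein C xs ys))

/-- Edit distance: minimum number of single-symbol insertions, deletions and
substitutions needed to transform `u` into `v` (Levenshtein distance with unit costs). -/
def ED {α : Type*} [DecidableEq α] (u v : List α) : ℕ :=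
  levenshtein Levenshtein.defaultCost u v

/- The alphabet `{1,…,6n} ∪ {a}` is modelled inside `ℕ`, with the special symbol `a := 0`
(distinct from all the integer symbols `1,…,6n`).  Indices of `α, β ∈ {0,1}^n` are
`0`-based: `α_j` (`1 ≤ j ≤ n`) is `a (j-1)`. -/

/-- `α' ∈ {0,1}^{2n}` (0-based): `α'_{2j−1} = α_j`, `α'_{2j} = 1 − α_j`. -/
def alphaP (a : ℕ → Bool) (j : ℕ) : Bool :=
  if j % 2 = 0 then a (j / 2) else !a (j / 2)

/-- `β' ∈ {0,1}^{2n}` (0-based): `β'_{2j−1} = 1 − β_j`, `β'_{2j} = β_j`. -/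
def betaP (b : ℕ → Bool) (j : ℕ) : Bool :=
  if j % 2 = 0 then !b (j / 2) else b (j / 2)

/-- `x1 ∈ Σ^{4n}` : for `j ∈ {1,…,2n}`, the `(2j−1)`-th symbol is `3j−2` and the `(2j)`-th
symbol is `3j−1` if `α'_j = 1`, and `a` (here `0`) otherwise. -/
def x1 (n : ℕ) (a : ℕ → Bool) : List ℕ :=
  ((List.range (2 * n)).map fun j =>
    [3 * (j + 1) - 2, if alphaP a j then 3 * (j + 1) - 1 else 0]).flatten

/-- `x2 ∈ Σ^{4n}` : for `j ∈ {1,…,2n}`, the `(2j−1)`-th symbol is `3j−1` if `β'_j = 1`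
(and `a`, here `0`, otherwise), and the `(2j)`-th symbol is `3j`. -/
def x2 (n : ℕ) (b : ℕ → Bool) : List ℕ :=
  ((List.range (2 * n)).map fun j =>
    [if betaP b j then 3 * (j + 1) - 1 else 0, 3 * (j + 1)]).flatten

/-- `y = (1, 2, …, 6n)`. -/
def ystr (n : ℕ) : List ℕ := List.range' 1 (6 * n)

section EDAux
variable {α : Type*} [DecidableEq α]

section LevAux
variable {β δ : Type*} [AddZeroClass δ] [Min δ] (C : Levenshtein.Cost α β δ)

@[simp] lemma levenshtein_nil_nil : levenshtein C [] [] = 0 := by rw [levenshtein]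

@[simp] lemma levenshtein_nil_cons (y : β) (ys : List β) :
    levenshtein C [] (y :: ys) = C.insert y + levenshtein C [] ys := by rw [levenshtein]

@[simp] lemma levenshtein_cons_nil (x : α) (xs : List α) :
    levenshtein C (x :: xs) [] = C.delete x + levenshtein C xs [] := by rw [levenshtein]

@[simp] lemma levenshtein_cons_cons (x : α) (xs : List α) (y : β) (ys : List β) :
    levenshtein C (x :: xs) (y :: ys) =
      min (C.delete x + levenshtein C xs (y :: ys))
        (min (C.insert y + levenshtein C (x :: xs) ys)
          (C.substitute x y + levenshtein C xs ys)) := by rw [levenshtein]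

end LevAux

@[simp] lemma defaultCost_delete (x : α) : (Levenshtein.defaultCost (α := α)).delete x = 1 := rfl

@[simp] lemma defaultCost_insert (x : α) : (Levenshtein.defaultCost (α := α)).insert x = 1 := rfl

@[simp] lemma defaultCost_substitute (x y : α) :
    (Levenshtein.defaultCost (α := α)).substitute x y = if x = y then 0 else 1 := rfl

lemma ED_nil_left (v : List α) : ED [] v = v.length := by
  induction v with
  | nil => simp [ED]
  | cons y ys ih => simp [ED, levenshtein_nil_cons] at *; omega

lemma ED_nil_right (u : List α) : ED u [] = u.length := by
  induction u with
  | nil => simp [ED]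
  | cons x xs ih => simp [ED, levenshtein_cons_nil] at *; omega

lemma ED_del (x : α) (u v : List α) : ED (x::u) v ≤ 1 + ED u v := by
  cases v with
  | nil => simp [ED, levenshtein_cons_nil]
  | cons y ys =>
    simp only [ED, levenshtein_cons_cons]
    exact le_trans (min_le_left _ _) (by simp [Levenshtein.defaultCost])

lemma ED_ins (y : α) (u v : List α) : ED u (y::v) ≤ 1 + ED u v := by
  cases u with
  | nil => simp [ED, levenshtein_nil_cons]
  | cons x xs =>
    simp only [ED, levenshtein_cons_cons]
    exact le_trans (le_trans (min_le_right _ _) (min_le_left _ _)) (by simp [Levenshtein.defaultCost])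

lemma ED_sub (x y : α) (u v : List α) : ED (x::u) (y::v) ≤ 1 + ED u v := by
  simp only [ED, levenshtein_cons_cons]
  refine le_trans (le_trans (min_le_right _ _) (min_le_right _ _)) ?_
  simp [Levenshtein.defaultCost]
  split <;> omega

lemma ED_match (x : α) (u v : List α) : ED (x::u) (x::v) ≤ ED u v := by
  simp only [ED, levenshtein_cons_cons]
  refine le_trans (le_trans (min_le_right _ _) (min_le_right _ _)) ?_
  simp [Levenshtein.defaultCost]

lemma ED_append_append (u x v y : List α) :
    ED (u ++ x) (v ++ y) ≤ ED u v + ED x y := by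
  induction u generalizing v with
  | nil =>
    induction v with
    | nil => simp
    | cons c v' ihv =>
      calc ED ([] ++ x) (c :: v' ++ y) ≤ 1 + ED ([] ++ x) (v' ++ y) := ED_ins ..
        _ ≤ 1 + (ED [] v' + ED x y) := by omega
        _ = ED [] (c :: v') + ED x y := by simp [ED_nil_left]; omega
  | cons d u' ihu =>
    induction v with
    | nil =>
      calc ED (d :: u' ++ x) ([] ++ y) ≤ 1 + ED (u' ++ x) ([] ++ y) := ED_del ..
        _ ≤ 1 + (ED u' [] + ED x y) := by have := ihu []; omega
        _ = ED (d :: u') [] + ED x y := by simp [ED_nil_right]; omega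
    | cons c v' ihv =>
      have h1 : ED (d :: u' ++ x) (c :: v' ++ y) ≤ 1 + ED (u' ++ x) (c :: v' ++ y) := ED_del ..
      have h2 : ED (d :: u' ++ x) (c :: v' ++ y) ≤ 1 + ED (d :: u' ++ x) (v' ++ y) := ED_ins ..
      have h3 : ED (d :: u' ++ x) (c :: v' ++ y) ≤
          Levenshtein.defaultCost.substitute d c + ED (u' ++ x) (v' ++ y) := by
        simp only [ED, List.cons_append, levenshtein_cons_cons]
        exact le_trans (min_le_right _ _) (min_le_right _ _)
      have e : ED (d :: u') (c :: v') =
          min (1 + ED u' (c :: v')) (min (1 + ED (d :: u') v')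
            (Levenshtein.defaultCost.substitute d c + ED u' v')) := by
        simp [ED, levenshtein_cons_cons, Levenshtein.defaultCost]
      have i1 := ihu (c :: v')
      have i2 := ihv
      have i3 := ihu v'
      rw [e]
      rcases min_cases (1 + ED u' (c :: v')) (min (1 + ED (d :: u') v')
        (Levenshtein.defaultCost.substitute d c + ED u' v')) with ⟨hmin, _⟩ | ⟨hmin, _⟩
      · omega
      · rw [hmin]
        rcases min_cases (1 + ED (d :: u') v')
          (Levenshtein.defaultCost.substitute d c + ED u' v') with ⟨hm2, _⟩ | ⟨hm2, _⟩
        · omega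
        · rw [hm2]; omega

end EDAux

lemma ED_flatten_le (l : List ℕ) (f g : ℕ → List ℕ) (c : ℕ)
    (h : ∀ i ∈ l, ED (f i) (g i) ≤ c) :
    ED ((l.map f).flatten) ((l.map g).flatten) ≤ c * l.length := by
  induction l with
  | nil => simp [ED_nil_left]
  | cons x xs ih =>
    simp only [List.map_cons, List.flatten_cons, List.length_cons]
    calc ED (f x ++ (xs.map f).flatten) (g x ++ (xs.map g).flatten)
        ≤ ED (f x) (g x) + ED ((xs.map f).flatten) ((xs.map g).flatten) := ED_append_append ..
      _ ≤ c + c * xs.length := by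
          have h1 := h x (by simp)
          have h2 := ih (fun i hi => h i (by simp [hi]))
          omega
      _ = c * (xs.length + 1) := by ring

lemma pairA_bound (i : ℕ) (c : Bool) :
    ED [6*i+1, if c then 6*i+2 else 0, 6*i+4, if c then 0 else 6*i+5]
       [6*i+1, 6*i+2, 6*i+3, 6*i+4, 6*i+5, 6*i+6] ≤ 3 := by
  cases c with
  | true =>
    simp only [if_pos]
    calc ED [6*i+1, 6*i+2, 6*i+4, 0] [6*i+1, 6*i+2, 6*i+3, 6*i+4, 6*i+5, 6*i+6]
        ≤ ED [6*i+2, 6*i+4, 0] [6*i+2, 6*i+3, 6*i+4, 6*i+5, 6*i+6] := ED_match ..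
      _ ≤ ED [6*i+4, 0] [6*i+3, 6*i+4, 6*i+5, 6*i+6] := ED_match ..
      _ ≤ 1 + ED [6*i+4, 0] [6*i+4, 6*i+5, 6*i+6] := ED_ins ..
      _ ≤ 1 + ED [0] [6*i+5, 6*i+6] := by have := ED_match (6*i+4) [(0:ℕ)] [6*i+5, 6*i+6]; omega
      _ ≤ 1 + (1 + ED ([]:List ℕ) [6*i+6]) := by have := ED_sub 0 (6*i+5) ([]:List ℕ) [6*i+6]; omega
      _ ≤ 3 := by rw [ED_nil_left]; simp
  | false =>
    simp only [Bool.false_eq_true, reduceIte]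
    calc ED [6*i+1, 0, 6*i+4, 6*i+5] [6*i+1, 6*i+2, 6*i+3, 6*i+4, 6*i+5, 6*i+6]
        ≤ ED [0, 6*i+4, 6*i+5] [6*i+2, 6*i+3, 6*i+4, 6*i+5, 6*i+6] := ED_match ..
      _ ≤ 1 + ED [6*i+4, 6*i+5] [6*i+3, 6*i+4, 6*i+5, 6*i+6] := ED_sub ..
      _ ≤ 1 + (1 + ED [6*i+4, 6*i+5] [6*i+4, 6*i+5, 6*i+6]) := by
          have := ED_ins (6*i+3) [6*i+4, 6*i+5] [6*i+4, 6*i+5, 6*i+6]; omega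
      _ ≤ 1 + (1 + ED ([]:List ℕ) [6*i+6]) := by
          have h1 := ED_match (6*i+4) [6*i+5] [6*i+5, 6*i+6]
          have h2 := ED_match (6*i+5) ([]:List ℕ) [6*i+6]; omega
      _ ≤ 3 := by rw [ED_nil_left]; simp

lemma pairB_bound (i : ℕ) (c : Bool) :
    ED [if c then 0 else 6*i+2, 6*i+3, if c then 6*i+5 else 0, 6*i+6]
       [6*i+1, 6*i+2, 6*i+3, 6*i+4, 6*i+5, 6*i+6] ≤ 3 := by
  cases c with
  | true =>
    simp only [if_pos]
    calc ED [0, 6*i+3, 6*i+5, 6*i+6] [6*i+1, 6*i+2, 6*i+3, 6*i+4, 6*i+5, 6*i+6]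
        ≤ 1 + ED [6*i+3, 6*i+5, 6*i+6] [6*i+2, 6*i+3, 6*i+4, 6*i+5, 6*i+6] := ED_sub ..
      _ ≤ 1 + (1 + ED [6*i+3, 6*i+5, 6*i+6] [6*i+3, 6*i+4, 6*i+5, 6*i+6]) := by
          have := ED_ins (6*i+2) [6*i+3, 6*i+5, 6*i+6] [6*i+3, 6*i+4, 6*i+5, 6*i+6]; omega
      _ ≤ 1 + (1 + ED [6*i+5, 6*i+6] [6*i+4, 6*i+5, 6*i+6]) := by
          have := ED_match (6*i+3) [6*i+5, 6*i+6] [6*i+4, 6*i+5, 6*i+6]; omega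
      _ ≤ 1 + (1 + (1 + ED ([]:List ℕ) [])) := by
          have h1 := ED_ins (6*i+4) [6*i+5, 6*i+6] [6*i+5, 6*i+6]
          have h2 := ED_match (6*i+5) [6*i+6] [6*i+6]
          have h3 := ED_match (6*i+6) ([]:List ℕ) []; omega
      _ ≤ 3 := by rw [ED_nil_left]; simp
  | false =>
    simp only [Bool.false_eq_true, reduceIte]
    calc ED [6*i+2, 6*i+3, 0, 6*i+6] [6*i+1, 6*i+2, 6*i+3, 6*i+4, 6*i+5, 6*i+6]
        ≤ 1 + ED [6*i+2, 6*i+3, 0, 6*i+6] [6*i+2, 6*i+3, 6*i+4, 6*i+5, 6*i+6] := ED_ins ..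
      _ ≤ 1 + ED [0, 6*i+6] [6*i+4, 6*i+5, 6*i+6] := by
          have h1 := ED_match (6*i+2) [6*i+3, 0, 6*i+6] [6*i+3, 6*i+4, 6*i+5, 6*i+6]
          have h2 := ED_match (6*i+3) [0, 6*i+6] [6*i+4, 6*i+5, 6*i+6]; omega
      _ ≤ 1 + (1 + ED [6*i+6] [6*i+5, 6*i+6]) := by
          have := ED_sub 0 (6*i+4) [6*i+6] [6*i+5, 6*i+6]; omega
      _ ≤ 1 + (1 + (1 + ED [6*i+6] [6*i+6])) := by
          have := ED_ins (6*i+5) [6*i+6] [6*i+6]; omega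
      _ ≤ 3 := by
          have h1 := ED_match (6*i+6) ([]:List ℕ) []
          have h2 : ED ([]:List ℕ) [] = 0 := by rw [ED_nil_left]; simp
          omega

lemma pairAj0 (i : ℕ) : ED [6*i+1, 6*i+2, 6*i+4, 0] [6*i+1, 6*i+2] ≤ 2 := by
  calc ED [6*i+1, 6*i+2, 6*i+4, 0] [6*i+1, 6*i+2]
      ≤ ED [6*i+2, 6*i+4, 0] [6*i+2] := ED_match ..
    _ ≤ ED [6*i+4, 0] [] := ED_match ..
    _ ≤ 2 := by rw [ED_nil_right]; simp

lemma pairBj0 (i : ℕ) : ED [0, 6*i+3, 6*i+5, 6*i+6] [6*i+3, 6*i+4, 6*i+5, 6*i+6] ≤ 2 := by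
  calc ED [0, 6*i+3, 6*i+5, 6*i+6] [6*i+3, 6*i+4, 6*i+5, 6*i+6]
      ≤ 1 + ED [6*i+3, 6*i+5, 6*i+6] [6*i+3, 6*i+4, 6*i+5, 6*i+6] := ED_del ..
    _ ≤ 1 + ED [6*i+5, 6*i+6] [6*i+4, 6*i+5, 6*i+6] := by
        have := ED_match (6*i+3) [6*i+5, 6*i+6] [6*i+4, 6*i+5, 6*i+6]; omega
    _ ≤ 1 + (1 + ED [6*i+5, 6*i+6] [6*i+5, 6*i+6]) := by
        have := ED_ins (6*i+4) [6*i+5, 6*i+6] [6*i+5, 6*i+6]; omega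
    _ ≤ 2 := by
        have h1 := ED_match (6*i+5) [6*i+6] [6*i+6]
        have h2 := ED_match (6*i+6) ([]:List ℕ) []
        have h3 : ED ([]:List ℕ) [] = 0 := by rw [ED_nil_left]; simp
        omega

lemma len_flatten_const (l : List ℕ) (f : ℕ → List ℕ) (c : ℕ) (h : ∀ i, (f i).length = c) :
    ((l.map f).flatten).length = c * l.length := by
  induction l with
  | nil => simp
  | cons x xs ih => simp only [List.map_cons, List.flatten_cons, List.length_append,
      List.length_cons, ih, h]; ring

lemma range'_six (s : ℕ) : List.range' s 6 = [s, s+1, s+2, s+3, s+4, s+5] := by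
  simp [List.range'_succ]

lemma ychunks (t m : ℕ) : List.range' (6*t+1) (6*m) =
    ((List.range' t m).map (fun i => [6*i+1, 6*i+2, 6*i+3, 6*i+4, 6*i+5, 6*i+6])).flatten := by
  induction m generalizing t with
  | zero => simp
  | succ k ih =>
    rw [List.range'_succ]
    simp only [List.map_cons, List.flatten_cons]
    rw [← ih (t+1)]
    rw [show (6*(k+1)) = (6*k) + 6 by ring]
    rw [Nat.add_comm (6*k) 6, ← List.range'_append (s := 6*t+1) (m := 6) (n := 6*k) (step := 1)]
    rw [show (6*t+1+1*6) = 6*(t+1)+1 by ring]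
    rw [range'_six]

lemma range_split (n j0 : ℕ) (h : j0 < n) :
    List.range n = List.range j0 ++ j0 :: List.range' (j0+1) (n-j0-1) := by
  rw [List.range_eq_range', List.range_eq_range']
  rw [show n = (n - j0) + j0 by omega]
  rw [Nat.add_comm (n-j0) j0, ← List.range'_append (s := 0) (m := j0) (n := n-j0) (step := 1)]
  rw [show (0+1*j0) = j0 by omega]
  rw [show (n-j0) = (n-j0-1) + 1 by omega, List.range'_succ]
  simp

def fA (a : ℕ → Bool) (i : ℕ) : List ℕ :=
  [6*i+1, if a i then 6*i+2 else 0, 6*i+4, if a i then 0 else 6*i+5]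

def fB (b : ℕ → Bool) (i : ℕ) : List ℕ :=
  [if b i then 0 else 6*i+2, 6*i+3, if b i then 6*i+5 else 0, 6*i+6]

lemma pair_regroup (f : ℕ → List ℕ) (n : ℕ) :
    ((List.range (2*n)).map f).flatten
      = ((List.range n).map (fun i => f (2*i) ++ f (2*i+1))).flatten := by
  induction n with
  | zero => simp
  | succ m ih =>
    have h2 : 2 * (m+1) = (2*m) + 1 + 1 := by ring
    rw [h2, List.range_succ, List.range_succ, List.range_succ]
    simp only [List.map_append, List.flatten_append, ih]
    simp

lemma x1_eq (n : ℕ) (a : ℕ → Bool) :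
    x1 n a = ((List.range n).map (fA a)).flatten := by
  unfold x1
  rw [pair_regroup]
  congr 1
  apply List.map_congr_left
  intro i _
  have h1 : (2*i) % 2 = 0 := by omega
  have h2 : (2*i) / 2 = i := by omega
  have h3 : (2*i+1) % 2 = 1 := by omega
  have h4 : (2*i+1) / 2 = i := by omega
  simp only [alphaP, h1, h2, h3, h4, fA]
  cases hai : a i <;> simp <;> omega

lemma x2_eq (n : ℕ) (b : ℕ → Bool) :
    x2 n b = ((List.range n).map (fB b)).flatten := by
  unfold x2
  rw [pair_regroup]
  congr 1
  apply List.map_congr_left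
  intro i _
  have h1 : (2*i) % 2 = 0 := by omega
  have h2 : (2*i) / 2 = i := by omega
  have h3 : (2*i+1) % 2 = 1 := by omega
  have h4 : (2*i+1) / 2 = i := by omega
  simp only [betaP, h1, h2, h3, h4, fB]
  cases hbi : b i <;> simp <;> omega


/-- If there exists an index `j ∈ {1,…,n}` with `α_j = β_j = 1`, then
`ED(x1 ∘ x2, y) ≤ 7n − 3`. -/

theorem stmt7 (n : ℕ) (hn : 0 < n) (a b : ℕ → Bool)
    (h : ∃ j < n, a j = true ∧ b j = true) :
    ED (x1 n a ++ x2 n b) (ystr n) ≤ 7 * n - 3 := by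
  obtain ⟨j0, hj0, ha, hb⟩ := h
  have hm2 : n - j0 - 1 + 1 + j0 = n := by omega
  set m2 := n - j0 - 1 with hm2def
  -- decomposition of x1 and x2
  have hx1 : x1 n a = ((List.range j0).map (fA a)).flatten ++
      (fA a j0 ++ ((List.range' (j0+1) m2).map (fA a)).flatten) := by
    rw [x1_eq, range_split n j0 hj0]
    simp only [List.map_append, List.map_cons, List.flatten_append, List.flatten_cons]
    rfl
  have hx2 : x2 n b = ((List.range j0).map (fB b)).flatten ++
      (fB b j0 ++ ((List.range' (j0+1) m2).map (fB b)).flatten) := by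
    rw [x2_eq, range_split n j0 hj0]
    simp only [List.map_append, List.map_cons, List.flatten_append, List.flatten_cons]
    rfl
  -- decomposition of y
  have hy : ystr n = List.range' 1 (6*j0) ++
      ([6*j0+1, 6*j0+2] ++ ([6*j0+3, 6*j0+4, 6*j0+5, 6*j0+6] ++ List.range' (6*j0+7) (6*m2))) := by
    have e1 : List.range' (6*j0+1) 6 ++ List.range' (6*j0+7) (6*m2)
        = List.range' (6*j0+1) (6*m2+6) := by
      rw [show (6*j0+7) = (6*j0+1)+1*6 by ring]
      rw [List.range'_append]; congr 1; omega
    have e2 : List.range' 1 (6*j0) ++ List.range' (6*j0+1) (6*m2+6)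
        = List.range' 1 (6*m2+6+6*j0) := by
      rw [show (6*j0+1) = 1+1*(6*j0) by ring]
      rw [List.range'_append]; congr 1; omega
    unfold ystr
    rw [show 6*n = 6*m2+6+6*j0 by omega, ← e2, ← e1, range'_six]
    simp
  -- the six bounds
  have hF1 : ED (((List.range j0).map (fA a)).flatten) (List.range' 1 (6*j0)) ≤ 3*j0 := by
    have hc := ychunks 0 j0
    rw [show (6*0+1) = 1 by ring] at hc
    rw [List.range_eq_range', hc]
    have := ED_flatten_le (List.range' 0 j0) (fA a)
      (fun i => [6*i+1, 6*i+2, 6*i+3, 6*i+4, 6*i+5, 6*i+6]) 3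
      (fun i _ => by simpa [fA] using pairA_bound i (a i))
    simpa using this
  have hA2 : ED (fA a j0) [6*j0+1, 6*j0+2] ≤ 2 := by
    simpa [fA, ha] using pairAj0 j0
  have hF3 : ED (((List.range' (j0+1) m2).map (fA a)).flatten) [] = 4*m2 := by
    rw [ED_nil_right, len_flatten_const _ _ 4 (by intro i; simp [fA])]
    simp
  have hG1 : ED (((List.range j0).map (fB b)).flatten) [] = 4*j0 := by
    rw [ED_nil_right, len_flatten_const _ _ 4 (by intro i; simp [fB])]
    simp
  have hB2 : ED (fB b j0) [6*j0+3, 6*j0+4, 6*j0+5, 6*j0+6] ≤ 2 := by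
    simpa [fB, hb] using pairBj0 j0
  have hG3 : ED (((List.range' (j0+1) m2).map (fB b)).flatten)
      (List.range' (6*j0+7) (6*m2)) ≤ 3*m2 := by
    have hc := ychunks (j0+1) m2
    rw [show (6*(j0+1)+1) = 6*j0+7 by ring] at hc
    rw [hc]
    have := ED_flatten_le (List.range' (j0+1) m2) (fB b)
      (fun i => [6*i+1, 6*i+2, 6*i+3, 6*i+4, 6*i+5, 6*i+6]) 3
      (fun i _ => by simpa [fB] using pairB_bound i (b i))
    simpa using this
  -- assemble
  rw [hx1, hx2, hy]
  simp only [List.append_assoc]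
  have t1 := ED_append_append (((List.range j0).map (fA a)).flatten)
    (fA a j0 ++ (((List.range' (j0+1) m2).map (fA a)).flatten ++
      (((List.range j0).map (fB b)).flatten ++ (fB b j0 ++ ((List.range' (j0+1) m2).map (fB b)).flatten))))
    (List.range' 1 (6*j0))
    ([6*j0+1, 6*j0+2] ++ ([6*j0+3, 6*j0+4, 6*j0+5, 6*j0+6] ++ List.range' (6*j0+7) (6*m2)))
  have t2 := ED_append_append (fA a j0)
    (((List.range' (j0+1) m2).map (fA a)).flatten ++
      (((List.range j0).map (fB b)).flatten ++ (fB b j0 ++ ((List.range' (j0+1) m2).map (fB b)).flatten)))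
    [6*j0+1, 6*j0+2]
    ([6*j0+3, 6*j0+4, 6*j0+5, 6*j0+6] ++ List.range' (6*j0+7) (6*m2))
  have t3 := ED_append_append (((List.range' (j0+1) m2).map (fA a)).flatten)
    (((List.range j0).map (fB b)).flatten ++ (fB b j0 ++ ((List.range' (j0+1) m2).map (fB b)).flatten))
    ([] : List ℕ)
    ([6*j0+3, 6*j0+4, 6*j0+5, 6*j0+6] ++ List.range' (6*j0+7) (6*m2))
  have t4 := ED_append_append (((List.range j0).map (fB b)).flatten)
    (fB b j0 ++ ((List.range' (j0+1) m2).map (fB b)).flatten)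
    ([] : List ℕ)
    ([6*j0+3, 6*j0+4, 6*j0+5, 6*j0+6] ++ List.range' (6*j0+7) (6*m2))
  have t5 := ED_append_append (fB b j0)
    (((List.range' (j0+1) m2).map (fB b)).flatten)
    [6*j0+3, 6*j0+4, 6*j0+5, 6*j0+6]
    (List.range' (6*j0+7) (6*m2))
  simp only [List.nil_append] at t3 t4
  omega
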